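/- (Existence of the representation η'₂.) For every n ≥ 2 and every f, w, y, v ∈ ℂ with f ≠ 0, v ≠ 0, and w² − f²·y² ≠ 0, there exists a group homomorphism ρ : VST_n → GL_n(ℂ) such that for all 1 ≤ i ≤ n−1: ρ(s_i) = L_i(!![0, f; f⁻¹, 0]), ρ(τ_i) = L_i(!![w, f²·y; y, w]), and ρ(ν_i) = L_i(!![0, v; v⁻¹, 0]). (In particular these matrices are invertible and satisfy all the defining relations of VST_n.) -/

import Mathlib

/-- Generator type for the virtual singular twin group `VST_n`:
three copies of `Fin (n-1)`, for the generators `s_i`, `τ_i`, `ν_i`. -/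
abbrev VSTGen (n : ℕ) := Fin (n - 1) ⊕ Fin (n - 1) ⊕ Fin (n - 1)

def vstS (n : ℕ) (i : Fin (n - 1)) : FreeGroup (VSTGen n) := FreeGroup.of (Sum.inl i)
def vstT (n : ℕ) (i : Fin (n - 1)) : FreeGroup (VSTGen n) := FreeGroup.of (Sum.inr (Sum.inl i))
def vstN (n : ℕ) (i : Fin (n - 1)) : FreeGroup (VSTGen n) := FreeGroup.of (Sum.inr (Sum.inr i))

def vstAdj {n : ℕ} (i j : Fin (n - 1)) : Prop := i.val + 1 = j.val ∨ j.val + 1 = i.val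
def vstFar {n : ℕ} (i j : Fin (n - 1)) : Prop := i.val + 2 ≤ j.val ∨ j.val + 2 ≤ i.val

/-- The defining relations of the virtual singular twin group `VST_n`. -/
def vstRels (n : ℕ) : Set (FreeGroup (VSTGen n)) :=
  {r | (∃ i, r = vstS n i * vstS n i) ∨
       (∃ i, r = vstN n i * vstN n i) ∨
       (∃ i, r = vstT n i * vstS n i * (vstS n i * vstT n i)⁻¹) ∨
       (∃ i j, vstAdj i j ∧
          r = vstS n i * vstS n j * vstT n i * (vstT n j * vstS n i * vstS n j)⁻¹) ∨
       (∃ i j, vstAdj i j ∧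
          r = vstN n i * vstN n j * vstN n i * (vstN n j * vstN n i * vstN n j)⁻¹) ∨
       (∃ i j, vstAdj i j ∧
          r = vstN n i * vstS n j * vstN n i * (vstN n j * vstS n i * vstN n j)⁻¹) ∨
       (∃ i j, vstAdj i j ∧
          r = vstN n i * vstT n j * vstN n i * (vstN n j * vstT n i * vstN n j)⁻¹) ∨
       (∃ i j, vstFar i j ∧
          ∃ g ∈ ({vstS n, vstT n, vstN n} : Set (Fin (n - 1) → FreeGroup (VSTGen n))),
          ∃ h ∈ ({vstS n, vstT n, vstN n} : Set (Fin (n - 1) → FreeGroup (VSTGen n))),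
            r = g i * h j * (h j * g i)⁻¹)}

/-- The virtual singular twin group `VST_n`. -/
abbrev VST (n : ℕ) := PresentedGroup (vstRels n)

/-- `Lmat n i M` is the `n × n` matrix agreeing with the identity outside rows and
columns `i, i+1` (0-indexed), with `2 × 2` block `M` there. -/
def Lmat {R : Type*} [Zero R] [One R] (n : ℕ) (i : ℕ) (M : Matrix (Fin 2) (Fin 2) R) :
    Matrix (Fin n) (Fin n) R :=
  Matrix.of fun a b =>
    if a.val = i ∧ b.val = i then M 0 0
    else if a.val = i ∧ b.val = i + 1 then M 0 1
    else if a.val = i + 1 ∧ b.val = i then M 1 0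
    else if a.val = i + 1 ∧ b.val = i + 1 then M 1 1
    else if a.val = b.val then 1 else 0



namespace Eta2PrimeAux

def L3 (n : ℕ) (k : ℕ) (M : Matrix (Fin 3) (Fin 3) ℂ) :
    Matrix (Fin n) (Fin n) ℂ :=
  Matrix.of fun a b =>
    if a.val = k ∧ b.val = k then M 0 0
    else if a.val = k ∧ b.val = k + 1 then M 0 1
    else if a.val = k ∧ b.val = k + 2 then M 0 2
    else if a.val = k + 1 ∧ b.val = k then M 1 0
    else if a.val = k + 1 ∧ b.val = k + 1 then M 1 1
    else if a.val = k + 1 ∧ b.val = k + 2 then M 1 2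
    else if a.val = k + 2 ∧ b.val = k then M 2 0
    else if a.val = k + 2 ∧ b.val = k + 1 then M 2 1
    else if a.val = k + 2 ∧ b.val = k + 2 then M 2 2
    else if a.val = b.val then 1 else 0

def em0 (M : Matrix (Fin 2) (Fin 2) ℂ) : Matrix (Fin 3) (Fin 3) ℂ :=
  !![M 0 0, M 0 1, 0; M 1 0, M 1 1, 0; 0, 0, 1]
def em1 (M : Matrix (Fin 2) (Fin 2) ℂ) : Matrix (Fin 3) (Fin 3) ℂ :=
  !![1, 0, 0; 0, M 0 0, M 0 1; 0, M 1 0, M 1 1]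

variable {n : ℕ}

lemma Lmat_e {i : ℕ} {M : Matrix (Fin 2) (Fin 2) ℂ} {a c : Fin n} (p q : Fin 2)
    (ha : a.val = i + p.val) (hc : c.val = i + q.val) :
    Lmat n i M a c = M p q := by
  have f1 : ¬(i + 1 = i) := by omega
  have f2 : ¬(i = i + 1) := by omega
  fin_cases p <;> fin_cases q <;>
    (norm_num at ha hc ⊢;
     simp only [Lmat, Matrix.of_apply, ha, hc, f1, f2, false_and, and_false,
       and_self, and_true, true_and, if_true, if_false, eq_self_iff_true, ite_true,
       ite_false]) <;> try rfl

lemma Lmat_row_id {i : ℕ} {M : Matrix (Fin 2) (Fin 2) ℂ} {a : Fin n}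
    (h1 : a.val ≠ i) (h2 : a.val ≠ i + 1) (c : Fin n) :
    Lmat n i M a c = if a = c then 1 else 0 := by
  simp only [Lmat, Matrix.of_apply, h1, h2, false_and, if_false, Fin.ext_iff]

lemma Lmat_block_zero {i : ℕ} {M : Matrix (Fin 2) (Fin 2) ℂ} {a c : Fin n}
    (ha : a.val = i ∨ a.val = i + 1) (h1 : c.val ≠ i) (h2 : c.val ≠ i + 1) :
    Lmat n i M a c = 0 := by
  simp only [Lmat, Matrix.of_apply, h1, h2, and_false, if_false]
  exact if_neg (by omega)

lemma L3_e {k : ℕ} {M : Matrix (Fin 3) (Fin 3) ℂ} {a c : Fin n} (p q : Fin 3)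
    (ha : a.val = k + p.val) (hc : c.val = k + q.val) :
    L3 n k M a c = M p q := by
  have f1 : ¬(k + 1 = k) := by omega
  have f2 : ¬(k + 2 = k) := by omega
  have f3 : ¬(k + 1 = k + 2) := by omega
  have f4 : ¬(k + 2 = k + 1) := by omega
  have f5 : ¬(k = k + 1) := by omega
  have f6 : ¬(k = k + 2) := by omega
  fin_cases p <;> fin_cases q <;>
    (norm_num at ha hc ⊢;
     simp only [L3, Matrix.of_apply, ha, hc, f1, f2, f3, f4, f5, f6, false_and, and_false,
       and_self, and_true, true_and, if_true, if_false, eq_self_iff_true, ite_true,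
       ite_false]) <;> try rfl

lemma L3_row_id {k : ℕ} {M : Matrix (Fin 3) (Fin 3) ℂ} {a : Fin n}
    (h1 : a.val ≠ k) (h2 : a.val ≠ k + 1) (h3 : a.val ≠ k + 2) (c : Fin n) :
    L3 n k M a c = if a = c then 1 else 0 := by
  simp only [L3, Matrix.of_apply, h1, h2, h3, false_and, if_false, Fin.ext_iff]

lemma L3_block_zero {k : ℕ} {M : Matrix (Fin 3) (Fin 3) ℂ} {a c : Fin n}
    (ha : a.val = k ∨ a.val = k + 1 ∨ a.val = k + 2)
    (h1 : c.val ≠ k) (h2 : c.val ≠ k + 1) (h3 : c.val ≠ k + 2) :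
    L3 n k M a c = 0 := by
  simp only [L3, Matrix.of_apply, h1, h2, h3, and_false, if_false]
  exact if_neg (by omega)

lemma sum_eq_three {M : Type*} [AddCommMonoid M] {f : Fin n → M} (x y z : Fin n)
    (hxy : x ≠ y) (hxz : x ≠ z) (hyz : y ≠ z)
    (h : ∀ c, c ≠ x → c ≠ y → c ≠ z → f c = 0) :
    ∑ c, f c = f x + f y + f z := by
  classical
  have h1 : ∑ c, f c = ∑ c ∈ ({x, y, z} : Finset (Fin n)), f c := by
    refine (Finset.sum_subset (Finset.subset_univ _) ?_).symm
    intro c _ hc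
    simp only [Finset.mem_insert, Finset.mem_singleton, not_or] at hc
    exact h c hc.1 hc.2.1 hc.2.2
  rw [h1, Finset.sum_insert (by simp [hxy, hxz]), Finset.sum_insert (by simp [hyz]),
    Finset.sum_singleton, add_assoc]

lemma Lmat_mul (i : ℕ) (hi : i + 2 ≤ n) (M N : Matrix (Fin 2) (Fin 2) ℂ) :
    Lmat n i M * Lmat n i N = Lmat n i (M * N) := by
  ext a b
  rw [Matrix.mul_apply]
  by_cases ha : a.val = i ∨ a.val = i + 1
  · obtain ⟨p, hp⟩ : ∃ p : Fin 2, a.val = i + p.val := by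
      rcases ha with h | h
      · exact ⟨0, by simpa using h⟩
      · exact ⟨1, by simpa using h⟩
    rw [Finset.sum_eq_add_of_mem (⟨i, by omega⟩ : Fin n) (⟨i + 1, by omega⟩ : Fin n)
      (Finset.mem_univ _) (Finset.mem_univ _) (by simp [Fin.ext_iff]) ?_]
    · rw [Lmat_e p 0 hp (by simp), Lmat_e p 1 hp (by simp)]
      by_cases hb : b.val = i ∨ b.val = i + 1
      · obtain ⟨q, hq⟩ : ∃ q : Fin 2, b.val = i + q.val := by
          rcases hb with h | h
          · exact ⟨0, by simpa using h⟩
          · exact ⟨1, by simpa using h⟩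
        rw [Lmat_e 0 q (by simp) hq, Lmat_e 1 q (by simp) hq, Lmat_e p q hp hq,
          Matrix.mul_apply, Fin.sum_univ_two]
      · rw [Lmat_block_zero (Or.inl (by simp)) (by omega) (by omega),
          Lmat_block_zero (Or.inr (by simp)) (by omega) (by omega),
          Lmat_block_zero ha (by omega) (by omega)]
        ring
    · intro c _ hc
      have hc1 : c.val ≠ i := fun h => hc.1 (Fin.ext h)
      have hc2 : c.val ≠ i + 1 := fun h => hc.2 (Fin.ext h)
      rw [Lmat_block_zero ha hc1 hc2, zero_mul]
  · have h1 : a.val ≠ i := by omega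
    have h2 : a.val ≠ i + 1 := by omega
    rw [Finset.sum_eq_single a ?_ (by simp)]
    · rw [Lmat_row_id h1 h2, if_pos rfl, one_mul, Lmat_row_id h1 h2, Lmat_row_id h1 h2]
    · intro c _ hc
      rw [Lmat_row_id h1 h2, if_neg (fun h => hc h.symm), zero_mul]

lemma L3_mul (k : ℕ) (hk : k + 3 ≤ n) (M N : Matrix (Fin 3) (Fin 3) ℂ) :
    L3 n k M * L3 n k N = L3 n k (M * N) := by
  ext a b
  rw [Matrix.mul_apply]
  by_cases ha : a.val = k ∨ a.val = k + 1 ∨ a.val = k + 2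
  · obtain ⟨p, hp⟩ : ∃ p : Fin 3, a.val = k + p.val := by
      rcases ha with h | h | h
      · exact ⟨0, by simpa using h⟩
      · exact ⟨1, by simpa using h⟩
      · exact ⟨2, by simpa using h⟩
    rw [sum_eq_three (⟨k, by omega⟩ : Fin n) (⟨k + 1, by omega⟩ : Fin n)
      (⟨k + 2, by omega⟩ : Fin n) (by simp [Fin.ext_iff]) (by simp [Fin.ext_iff])
      (by simp [Fin.ext_iff]) ?_]
    · rw [L3_e p 0 hp (by simp), L3_e p 1 hp (by simp), L3_e p 2 hp (by simp)]
      by_cases hb : b.val = k ∨ b.val = k + 1 ∨ b.val = k + 2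
      · obtain ⟨q, hq⟩ : ∃ q : Fin 3, b.val = k + q.val := by
          rcases hb with h | h | h
          · exact ⟨0, by simpa using h⟩
          · exact ⟨1, by simpa using h⟩
          · exact ⟨2, by simpa using h⟩
        rw [L3_e 0 q (by simp) hq, L3_e 1 q (by simp) hq, L3_e 2 q (by simp) hq,
          L3_e p q hp hq, Matrix.mul_apply, Fin.sum_univ_three]
      · rw [L3_block_zero (Or.inl (by simp)) (by omega) (by omega) (by omega),
          L3_block_zero (Or.inr (Or.inl (by simp))) (by omega) (by omega) (by omega),
          L3_block_zero (Or.inr (Or.inr (by simp))) (by omega) (by omega) (by omega),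
          L3_block_zero ha (by omega) (by omega) (by omega)]
        ring
    · intro c hc1' hc2' hc3'
      have hc1 : c.val ≠ k := fun h => hc1' (Fin.ext h)
      have hc2 : c.val ≠ k + 1 := fun h => hc2' (Fin.ext h)
      have hc3 : c.val ≠ k + 2 := fun h => hc3' (Fin.ext h)
      rw [L3_block_zero ha hc1 hc2 hc3, zero_mul]
  · have h1 : a.val ≠ k := by omega
    have h2 : a.val ≠ k + 1 := by omega
    have h3 : a.val ≠ k + 2 := by omega
    rw [Finset.sum_eq_single a ?_ (by simp)]
    · rw [L3_row_id h1 h2 h3, if_pos rfl, one_mul, L3_row_id h1 h2 h3, L3_row_id h1 h2 h3]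
    · intro c _ hc
      rw [L3_row_id h1 h2 h3, if_neg (fun h => hc h.symm), zero_mul]

lemma Lmat_eq_L3_em0 (k : ℕ) (M : Matrix (Fin 2) (Fin 2) ℂ) :
    Lmat n k M = L3 n k (em0 M) := by
  ext a b
  by_cases ha : ∃ p : Fin 3, a.val = k + p.val
  · obtain ⟨p, hp⟩ := ha
    by_cases hb : ∃ q : Fin 3, b.val = k + q.val
    · obtain ⟨q, hq⟩ := hb
      rw [L3_e p q hp hq]
      fin_cases p <;> fin_cases q <;> norm_num at hp hq <;>
        (try simp only [Fin.isValue, Fin.val_zero, Fin.val_one, Fin.val_two] at hp hq) <;>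
        (first
          | rw [Lmat_e 0 0 (by simpa using hp) (by simpa using hq)]
          | rw [Lmat_e 0 1 (by simpa using hp) (by simpa using hq)]
          | rw [Lmat_e 1 0 (by simpa using hp) (by simpa using hq)]
          | rw [Lmat_e 1 1 (by simpa using hp) (by simpa using hq)]
          | rw [Lmat_block_zero (Or.inl (by omega)) (by omega) (by omega)]
          | rw [Lmat_block_zero (Or.inr (by omega)) (by omega) (by omega)]
          | rw [Lmat_row_id (by omega) (by omega), if_pos (Fin.ext (by omega))]
          | rw [Lmat_row_id (by omega) (by omega), if_neg (by simp only [Fin.ext_iff]; omega)]) <;>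
        norm_num [em0]
    · have hb0 : b.val ≠ k := fun h => hb ⟨0, by simpa using h⟩
      have hb1 : b.val ≠ k + 1 := fun h => hb ⟨1, by simpa using h⟩
      have hb2 : b.val ≠ k + 2 := fun h => hb ⟨2, by simpa using h⟩
      have haor : a.val = k ∨ a.val = k + 1 ∨ a.val = k + 2 := by
        fin_cases p <;> norm_num at hp <;>
          (try simp only [Fin.isValue, Fin.val_zero, Fin.val_one, Fin.val_two] at hp) <;> omega
      rw [L3_block_zero haor hb0 hb1 hb2]
      rcases haor with h | h | h
      · rw [Lmat_block_zero (Or.inl h) hb0 hb1]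
      · rw [Lmat_block_zero (Or.inr h) hb0 hb1]
      · rw [Lmat_row_id (by omega) (by omega), if_neg (by simp only [Fin.ext_iff]; omega)]
  · have ha0 : a.val ≠ k := fun h => ha ⟨0, by simpa using h⟩
    have ha1 : a.val ≠ k + 1 := fun h => ha ⟨1, by simpa using h⟩
    have ha2 : a.val ≠ k + 2 := fun h => ha ⟨2, by simpa using h⟩
    rw [Lmat_row_id ha0 ha1, L3_row_id ha0 ha1 ha2]

lemma Lmat_eq_L3_em1 (k : ℕ) (M : Matrix (Fin 2) (Fin 2) ℂ) :
    Lmat n (k + 1) M = L3 n k (em1 M) := by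
  ext a b
  by_cases ha : ∃ p : Fin 3, a.val = k + p.val
  · obtain ⟨p, hp⟩ := ha
    by_cases hb : ∃ q : Fin 3, b.val = k + q.val
    · obtain ⟨q, hq⟩ := hb
      rw [L3_e p q hp hq]
      fin_cases p <;> fin_cases q <;> norm_num at hp hq <;>
        (try simp only [Fin.isValue, Fin.val_zero, Fin.val_one, Fin.val_two] at hp hq) <;>
        (first
          | rw [Lmat_e 0 0 (by simp only [Fin.isValue, Fin.val_zero, Fin.val_one]; omega) (by simp only [Fin.isValue, Fin.val_zero, Fin.val_one]; omega)]
          | rw [Lmat_e 0 1 (by simp only [Fin.isValue, Fin.val_zero, Fin.val_one]; omega) (by simp only [Fin.isValue, Fin.val_zero, Fin.val_one]; omega)]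
          | rw [Lmat_e 1 0 (by simp only [Fin.isValue, Fin.val_zero, Fin.val_one]; omega) (by simp only [Fin.isValue, Fin.val_zero, Fin.val_one]; omega)]
          | rw [Lmat_e 1 1 (by simp only [Fin.isValue, Fin.val_zero, Fin.val_one]; omega) (by simp only [Fin.isValue, Fin.val_zero, Fin.val_one]; omega)]
          | rw [Lmat_block_zero (Or.inl (by omega)) (by omega) (by omega)]
          | rw [Lmat_block_zero (Or.inr (by omega)) (by omega) (by omega)]
          | rw [Lmat_row_id (by omega) (by omega), if_pos (Fin.ext (by omega))]
          | rw [Lmat_row_id (by omega) (by omega), if_neg (by simp only [Fin.ext_iff]; omega)]) <;>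
        norm_num [em1]
    · have hb0 : b.val ≠ k := fun h => hb ⟨0, by simpa using h⟩
      have hb1 : b.val ≠ k + 1 := fun h => hb ⟨1, by simpa using h⟩
      have hb2 : b.val ≠ k + 2 := fun h => hb ⟨2, by simpa using h⟩
      have haor : a.val = k ∨ a.val = k + 1 ∨ a.val = k + 2 := by
        fin_cases p <;> norm_num at hp <;>
          (try simp only [Fin.isValue, Fin.val_zero, Fin.val_one, Fin.val_two] at hp) <;> omega
      rw [L3_block_zero haor hb0 hb1 hb2]
      rcases haor with h | h | h
      · rw [Lmat_row_id (by omega) (by omega), if_neg (by simp only [Fin.ext_iff]; omega)]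
      · rw [Lmat_block_zero (Or.inl h) hb1 hb2]
      · rw [Lmat_block_zero (Or.inr (by omega)) hb1 hb2]
  · have ha0 : a.val ≠ k := fun h => ha ⟨0, by simpa using h⟩
    have ha1 : a.val ≠ k + 1 := fun h => ha ⟨1, by simpa using h⟩
    have ha2 : a.val ≠ k + 2 := fun h => ha ⟨2, by simpa using h⟩
    rw [Lmat_row_id ha1 (by omega), L3_row_id ha0 ha1 ha2]

lemma Lmat_one (i : ℕ) : Lmat n i (1 : Matrix (Fin 2) (Fin 2) ℂ) = 1 := by
  ext a b
  by_cases ha : a.val = i ∨ a.val = i + 1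
  · by_cases hb : b.val = i ∨ b.val = i + 1
    · obtain ⟨p, hp⟩ : ∃ p : Fin 2, a.val = i + p.val := by
        rcases ha with h | h
        · exact ⟨0, by simpa using h⟩
        · exact ⟨1, by simpa using h⟩
      obtain ⟨q, hq⟩ : ∃ q : Fin 2, b.val = i + q.val := by
        rcases hb with h | h
        · exact ⟨0, by simpa using h⟩
        · exact ⟨1, by simpa using h⟩
      have hpq : (p = q) = (a = b) := by
        apply propext
        rw [Fin.ext_iff, Fin.ext_iff]
        omega
      rw [Lmat_e p q hp hq, Matrix.one_apply, Matrix.one_apply]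
      simp only [hpq]
    · rw [Lmat_block_zero ha (by omega) (by omega), Matrix.one_apply,
        if_neg (by simp only [Fin.ext_iff]; omega)]
  · rw [Lmat_row_id (by omega) (by omega), Matrix.one_apply]

lemma mul_row_id {A B : Matrix (Fin n) (Fin n) ℂ} {a : Fin n}
    (ha : ∀ c, A a c = if a = c then 1 else 0) (b : Fin n) : (A * B) a b = B a b := by
  rw [Matrix.mul_apply]
  simp [ha, ite_mul, Finset.sum_ite_eq]

lemma Lmat_comm {i j : ℕ} (hij : i + 2 ≤ j) (M N : Matrix (Fin 2) (Fin 2) ℂ) :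
    Lmat n i M * Lmat n j N = Lmat n j N * Lmat n i M := by
  ext a b
  by_cases hai : a.val = i ∨ a.val = i + 1
  · rw [mul_row_id (fun c => Lmat_row_id (i := j) (by omega) (by omega) c)]
    rw [Matrix.mul_apply]
    have hterm : ∀ c : Fin n, Lmat n i M a c * Lmat n j N c b
        = if c = b then Lmat n i M a c else 0 := by
      intro c
      by_cases hci : c.val = j ∨ c.val = j + 1
      · rw [Lmat_block_zero hai (by omega) (by omega)]
        simp
      · rw [Lmat_row_id (i := j) (by omega) (by omega)]
        split_ifs <;> simp_all
    rw [Finset.sum_congr rfl fun c _ => hterm c]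
    simp
  · by_cases haj : a.val = j ∨ a.val = j + 1
    · rw [mul_row_id (fun c => Lmat_row_id (i := i) (by omega) (by omega) c)]
      rw [Matrix.mul_apply]
      have hterm : ∀ c : Fin n, Lmat n j N a c * Lmat n i M c b
          = if c = b then Lmat n j N a c else 0 := by
        intro c
        by_cases hci : c.val = i ∨ c.val = i + 1
        · rw [Lmat_block_zero haj (by omega) (by omega)]
          simp
        · rw [Lmat_row_id (i := i) (by omega) (by omega)]
          split_ifs <;> simp_all
      rw [Finset.sum_congr rfl fun c _ => hterm c]
      simp
    · rw [mul_row_id (fun c => Lmat_row_id (i := i) (by omega) (by omega) c),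
        mul_row_id (fun c => Lmat_row_id (i := j) (by omega) (by omega) c),
        Lmat_row_id (i := i) (by omega) (by omega),
        Lmat_row_id (i := j) (by omega) (by omega)]

lemma adj_lift (k : ℕ) (hk : k + 3 ≤ n) (A B C D E F : Matrix (Fin 2) (Fin 2) ℂ)
    (h3 : em0 A * em1 B * em0 C = em1 D * em0 E * em1 F) :
    Lmat n k A * Lmat n (k + 1) B * Lmat n k C
      = Lmat n (k + 1) D * Lmat n k E * Lmat n (k + 1) F := by
  rw [Lmat_eq_L3_em1 k B, Lmat_eq_L3_em1 k D, Lmat_eq_L3_em1 k F,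
    Lmat_eq_L3_em0 k A, Lmat_eq_L3_em0 k C, Lmat_eq_L3_em0 k E,
    L3_mul k hk, L3_mul k hk, L3_mul k hk, L3_mul k hk, h3]

lemma adj_lift' (k : ℕ) (hk : k + 3 ≤ n) (A B C D E F : Matrix (Fin 2) (Fin 2) ℂ)
    (h3 : em1 A * em0 B * em1 C = em0 D * em1 E * em0 F) :
    Lmat n (k + 1) A * Lmat n k B * Lmat n (k + 1) C
      = Lmat n k D * Lmat n (k + 1) E * Lmat n k F := by
  rw [Lmat_eq_L3_em1 k A, Lmat_eq_L3_em1 k C, Lmat_eq_L3_em1 k E,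
    Lmat_eq_L3_em0 k B, Lmat_eq_L3_em0 k D, Lmat_eq_L3_em0 k F,
    L3_mul k hk, L3_mul k hk, L3_mul k hk, L3_mul k hk, h3]



noncomputable def Smat (f : ℂ) : Matrix (Fin 2) (Fin 2) ℂ := !![0, f; f⁻¹, 0]
noncomputable def Tmat (f w y : ℂ) : Matrix (Fin 2) (Fin 2) ℂ := !![w, f ^ 2 * y; y, w]
noncomputable def Tmat' (f w y : ℂ) : Matrix (Fin 2) (Fin 2) ℂ :=
  (w ^ 2 - f ^ 2 * y ^ 2)⁻¹ • !![w, -(f ^ 2 * y); -y, w]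
noncomputable def Vmat (v : ℂ) : Matrix (Fin 2) (Fin 2) ℂ := !![0, v; v⁻¹, 0]

variable {f w y v : ℂ}

lemma Smat_sq (hf : f ≠ 0) : Smat f * Smat f = 1 := by
  rw [Smat, Matrix.mul_fin_two, Matrix.one_fin_two]
  norm_num [inv_mul_cancel₀ hf, mul_inv_cancel₀ hf]

lemma Vmat_sq (hv : v ≠ 0) : Vmat v * Vmat v = 1 := by
  rw [Vmat, Matrix.mul_fin_two, Matrix.one_fin_two]
  norm_num [inv_mul_cancel₀ hv, mul_inv_cancel₀ hv]

lemma Tmat_Tmat' (hdet : w ^ 2 - f ^ 2 * y ^ 2 ≠ 0) : Tmat f w y * Tmat' f w y = 1 := by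
  have hdet' : -(y ^ 2 * f ^ 2) + w ^ 2 ≠ 0 := by intro h; apply hdet; linear_combination h
  ext a b
  fin_cases a <;> fin_cases b <;>
    simp [Tmat, Tmat', Matrix.mul_apply, Fin.sum_univ_two, Matrix.one_apply] <;>
    field_simp <;> ring
  all_goals rw [← neg_mul, ← add_mul, mul_inv_cancel₀ hdet']


lemma Tmat'_Tmat (hdet : w ^ 2 - f ^ 2 * y ^ 2 ≠ 0) : Tmat' f w y * Tmat f w y = 1 := by
  ext a b
  fin_cases a <;> fin_cases b <;>
    simp [Tmat, Tmat', Matrix.mul_apply, Fin.sum_univ_two, Matrix.one_apply] <;>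
    field_simp <;> ring

lemma Tmat_Smat_comm (hf : f ≠ 0) : Tmat f w y * Smat f = Smat f * Tmat f w y := by
  ext a b
  fin_cases a <;> fin_cases b <;>
    (try simp [Tmat, Smat, Matrix.mul_apply, Fin.sum_univ_two]) <;> (try field_simp) <;> (try ring)

lemma id1 (hf : f ≠ 0) :
    em0 (Smat f) * em1 (Smat f) * em0 (Tmat f w y)
      = em1 (Tmat f w y) * em0 (Smat f) * em1 (Smat f) := by
  ext a b
  fin_cases a <;> fin_cases b <;>
    (try simp [em0, em1, Smat, Tmat, Vmat, Matrix.mul_apply, Fin.sum_univ_three, Matrix.vecHead, Matrix.vecTail, Function.comp]) <;>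
    (try field_simp) <;> (try ring)

lemma id2 (hf : f ≠ 0) :
    em1 (Smat f) * em0 (Smat f) * em1 (Tmat f w y)
      = em0 (Tmat f w y) * em1 (Smat f) * em0 (Smat f) := by
  ext a b
  fin_cases a <;> fin_cases b <;>
    (try simp [em0, em1, Smat, Tmat, Vmat, Matrix.mul_apply, Fin.sum_univ_three, Matrix.vecHead, Matrix.vecTail, Function.comp]) <;>
    (try field_simp) <;> (try ring)

lemma id3 (hv : v ≠ 0) :
    em0 (Vmat v) * em1 (Vmat v) * em0 (Vmat v)
      = em1 (Vmat v) * em0 (Vmat v) * em1 (Vmat v) := by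
  ext a b
  fin_cases a <;> fin_cases b <;>
    (try simp [em0, em1, Smat, Tmat, Vmat, Matrix.mul_apply, Fin.sum_univ_three, Matrix.vecHead, Matrix.vecTail, Function.comp]) <;>
    (try field_simp) <;> (try ring)

lemma id4 (hf : f ≠ 0) (hv : v ≠ 0) :
    em0 (Vmat v) * em1 (Smat f) * em0 (Vmat v)
      = em1 (Vmat v) * em0 (Smat f) * em1 (Vmat v) := by
  ext a b
  fin_cases a <;> fin_cases b <;>
    (try simp [em0, em1, Smat, Tmat, Vmat, Matrix.mul_apply, Fin.sum_univ_three, Matrix.vecHead, Matrix.vecTail, Function.comp]) <;>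
    (try field_simp) <;> (try ring)

lemma id5 (hv : v ≠ 0) :
    em0 (Vmat v) * em1 (Tmat f w y) * em0 (Vmat v)
      = em1 (Vmat v) * em0 (Tmat f w y) * em1 (Vmat v) := by
  ext a b
  fin_cases a <;> fin_cases b <;>
    (try simp [em0, em1, Smat, Tmat, Vmat, Matrix.mul_apply, Fin.sum_univ_three, Matrix.vecHead, Matrix.vecTail, Function.comp]) <;>
    (try field_simp) <;> (try ring)


section units

variable (n : ℕ) {f w y v : ℂ}

lemma fin_bound (i : Fin (n - 1)) : (i : ℕ) + 2 ≤ n := by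
  have := i.isLt; omega

lemma fin_bound3 {i j : Fin (n - 1)} (h : (i : ℕ) + 1 = (j : ℕ)) : (i : ℕ) + 3 ≤ n := by
  have := j.isLt; omega

noncomputable def unitS (hf : f ≠ 0) (i : Fin (n - 1)) :
    Matrix.GeneralLinearGroup (Fin n) ℂ :=
  ⟨Lmat n i (Smat f), Lmat n i (Smat f),
    by rw [Lmat_mul _ (fin_bound n i), Smat_sq hf, Lmat_one],
    by rw [Lmat_mul _ (fin_bound n i), Smat_sq hf, Lmat_one]⟩

noncomputable def unitT (hdet : w ^ 2 - f ^ 2 * y ^ 2 ≠ 0) (i : Fin (n - 1)) :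
    Matrix.GeneralLinearGroup (Fin n) ℂ :=
  ⟨Lmat n i (Tmat f w y), Lmat n i (Tmat' f w y),
    by rw [Lmat_mul _ (fin_bound n i), Tmat_Tmat' hdet, Lmat_one],
    by rw [Lmat_mul _ (fin_bound n i), Tmat'_Tmat hdet, Lmat_one]⟩

noncomputable def unitV (hv : v ≠ 0) (i : Fin (n - 1)) :
    Matrix.GeneralLinearGroup (Fin n) ℂ :=
  ⟨Lmat n i (Vmat v), Lmat n i (Vmat v),
    by rw [Lmat_mul _ (fin_bound n i), Vmat_sq hv, Lmat_one],
    by rw [Lmat_mul _ (fin_bound n i), Vmat_sq hv, Lmat_one]⟩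

@[simp] lemma unitS_val (hf : f ≠ 0) (i : Fin (n - 1)) :
    (unitS n hf i : Matrix (Fin n) (Fin n) ℂ) = Lmat n i (Smat f) := rfl

@[simp] lemma unitT_val (hdet : w ^ 2 - f ^ 2 * y ^ 2 ≠ 0) (i : Fin (n - 1)) :
    (unitT n hdet i : Matrix (Fin n) (Fin n) ℂ) = Lmat n i (Tmat f w y) := rfl

@[simp] lemma unitV_val (hv : v ≠ 0) (i : Fin (n - 1)) :
    (unitV n hv i : Matrix (Fin n) (Fin n) ℂ) = Lmat n i (Vmat v) := rfl

noncomputable def Fmap (hf : f ≠ 0) (hv : v ≠ 0) (hdet : w ^ 2 - f ^ 2 * y ^ 2 ≠ 0) :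
    VSTGen n → Matrix.GeneralLinearGroup (Fin n) ℂ :=
  Sum.elim (unitS n hf) (Sum.elim (unitT n hdet) (unitV n hv))

lemma units_eq_of_val {G : Type*} [Monoid G] {u v : Gˣ} (h : (u : G) = v) : u = v :=
  Units.ext h

lemma rels_check (hf : f ≠ 0) (hv : v ≠ 0) (hdet : w ^ 2 - f ^ 2 * y ^ 2 ≠ 0) :
    ∀ r ∈ vstRels n, FreeGroup.lift (Fmap n hf hv hdet) r = 1 := by
  intro r hr
  obtain h | h | h | h | h | h | h | h := hr
  · -- s_i^2 = 1
    obtain ⟨i, rfl⟩ := h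
    simp only [map_mul, vstS, FreeGroup.lift_apply_of, Fmap, Sum.elim_inl]
    refine Units.ext ?_
    rw [Units.val_mul, Units.val_one, unitS_val, Lmat_mul _ (fin_bound n i),
      Smat_sq hf, Lmat_one]
  · -- ν_i^2 = 1
    obtain ⟨i, rfl⟩ := h
    simp only [map_mul, vstN, FreeGroup.lift_apply_of, Fmap, Sum.elim_inr]
    refine Units.ext ?_
    rw [Units.val_mul, Units.val_one, unitV_val, Lmat_mul _ (fin_bound n i),
      Vmat_sq hv, Lmat_one]
  · -- τ_i s_i = s_i τ_i
    obtain ⟨i, rfl⟩ := h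
    simp only [map_mul, map_inv, vstS, vstT, FreeGroup.lift_apply_of, Fmap, Sum.elim_inl,
      Sum.elim_inr]
    rw [mul_inv_eq_one]
    refine Units.ext ?_
    rw [Units.val_mul, Units.val_mul, unitS_val, unitT_val,
      Lmat_mul _ (fin_bound n i), Lmat_mul _ (fin_bound n i), Tmat_Smat_comm hf]
  · -- s_i s_j τ_i = τ_j s_i s_j for adjacent i j
    obtain ⟨i, j, hadj, rfl⟩ := h
    simp only [map_mul, map_inv, vstS, vstT, FreeGroup.lift_apply_of, Fmap, Sum.elim_inl,
      Sum.elim_inr]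
    rw [mul_inv_eq_one]
    refine Units.ext ?_
    simp only [Units.val_mul, unitS_val, unitT_val]
    rcases hadj with hadj | hadj
    · rw [← hadj]
      exact adj_lift _ (fin_bound3 n hadj) _ _ _ _ _ _ (id1 hf)
    · rw [← hadj]
      exact adj_lift' _ (fin_bound3 n hadj) _ _ _ _ _ _ (id2 hf)
  · -- ν braid
    obtain ⟨i, j, hadj, rfl⟩ := h
    simp only [map_mul, map_inv, vstN, FreeGroup.lift_apply_of, Fmap, Sum.elim_inr]
    rw [mul_inv_eq_one]
    refine Units.ext ?_
    simp only [Units.val_mul, unitV_val]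
    rcases hadj with hadj | hadj
    · rw [← hadj]
      exact adj_lift _ (fin_bound3 n hadj) _ _ _ _ _ _ (id3 hv)
    · rw [← hadj]
      exact adj_lift' _ (fin_bound3 n hadj) _ _ _ _ _ _ (id3 hv).symm
  · -- ν_i s_j ν_i = ν_j s_i ν_j
    obtain ⟨i, j, hadj, rfl⟩ := h
    simp only [map_mul, map_inv, vstN, vstS, FreeGroup.lift_apply_of, Fmap, Sum.elim_inl,
      Sum.elim_inr]
    rw [mul_inv_eq_one]
    refine Units.ext ?_
    simp only [Units.val_mul, unitS_val, unitV_val]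
    rcases hadj with hadj | hadj
    · rw [← hadj]
      exact adj_lift _ (fin_bound3 n hadj) _ _ _ _ _ _ (id4 hf hv)
    · rw [← hadj]
      exact adj_lift' _ (fin_bound3 n hadj) _ _ _ _ _ _ (id4 hf hv).symm
  · -- ν_i τ_j ν_i = ν_j τ_i ν_j
    obtain ⟨i, j, hadj, rfl⟩ := h
    simp only [map_mul, map_inv, vstN, vstT, FreeGroup.lift_apply_of, Fmap, Sum.elim_inl,
      Sum.elim_inr]
    rw [mul_inv_eq_one]
    refine Units.ext ?_
    simp only [Units.val_mul, unitT_val, unitV_val]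
    rcases hadj with hadj | hadj
    · rw [← hadj]
      exact adj_lift _ (fin_bound3 n hadj) _ _ _ _ _ _ (id5 hv)
    · rw [← hadj]
      exact adj_lift' _ (fin_bound3 n hadj) _ _ _ _ _ _ (id5 hv).symm
  · -- far commutation
    obtain ⟨i, j, hfar, g, hg, h, hh, rfl⟩ := h
    have comm : ∀ A B : Matrix (Fin 2) (Fin 2) ℂ,
        Lmat n i A * Lmat n j B = Lmat n j B * Lmat n i A := by
      intro A B
      rcases hfar with hle | hle
      · exact Lmat_comm hle A B
      · exact (Lmat_comm hle B A).symm
    simp only [Set.mem_insert_iff, Set.mem_singleton_iff] at hg hh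
    obtain rfl | rfl | rfl := hg <;> obtain rfl | rfl | rfl := hh <;>
      (simp only [map_mul, map_inv, vstN, vstS, vstT, FreeGroup.lift_apply_of, Fmap,
        Sum.elim_inl, Sum.elim_inr];
       rw [mul_inv_eq_one];
       refine Units.ext ?_;
       simp only [Units.val_mul, unitS_val, unitT_val, unitV_val];
       exact comm _ _)

end units



end Eta2PrimeAux

/-- Existence of the representation `η'₂` of `VST_n`:
`s_i ↦ L_i(!![0, f; f⁻¹, 0])`, `τ_i ↦ L_i(!![w, f²y; y, w])`,
`ν_i ↦ L_i(!![0, v; v⁻¹, 0])`. -/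
theorem exists_eta2_prime_representation (n : ℕ) (hn : 2 ≤ n) (f w y v : ℂ)
    (hf : f ≠ 0) (hv : v ≠ 0) (hdet : w ^ 2 - f ^ 2 * y ^ 2 ≠ 0) :
    ∃ ρ : VST n →* Matrix.GeneralLinearGroup (Fin n) ℂ,
      ∀ i : Fin (n - 1),
        ((ρ (PresentedGroup.of (Sum.inl i)) : Matrix (Fin n) (Fin n) ℂ))
          = Lmat n i.val !![0, f; f⁻¹, 0] ∧
        ((ρ (PresentedGroup.of (Sum.inr (Sum.inl i))) : Matrix (Fin n) (Fin n) ℂ))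
          = Lmat n i.val !![w, f ^ 2 * y; y, w] ∧
        ((ρ (PresentedGroup.of (Sum.inr (Sum.inr i))) : Matrix (Fin n) (Fin n) ℂ))
          = Lmat n i.val !![0, v; v⁻¹, 0] := by
  classical
  refine ⟨PresentedGroup.toGroup (Eta2PrimeAux.rels_check n hf hv hdet), fun i => ?_⟩
  refine ⟨?_, ?_, ?_⟩ <;> rw [PresentedGroup.toGroup.of] <;> rfl
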